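/- Let T be a finite tree with at least 2 vertices, let α = μ(T) be its Laplacian spectral radius, and suppose Δ(T) ≤ r for a positive integer r. If φ is a function from V(T) to the positive real numbers such that for every vertex v, (α − d(v))·φ(v) = ∑_{w ∈ N(v)} φ(w), then φ(u₁)/φ(u₂) ∈ ℒ_r(α) for every edge u₁u₂ of T (in both orders), and consequently (α−1)⁻¹ ∈ ℒ_r(α). -/

import Mathlib

open Finset

/-- The set `ℒ_r(α)`: the smallest set of reals containing `α - 1` and closed under the rule:
for `1 ≤ s ≤ r - 1` and `q₁, …, q_s ∈ ℒ_r(α)`, if `β := α − 1 − s − ∑ qᵢ⁻¹ > 0`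
then `β ∈ ℒ_r(α)`. -/
inductive LSet (r : ℕ) (α : ℝ) : ℝ → Prop
  | base : LSet r α (α - 1)
  | step (s : ℕ) (hs1 : 1 ≤ s) (hsr : s ≤ r - 1) (q : Fin s → ℝ)
      (hmem : ∀ i, LSet r α (q i))
      (hpos : 0 < α - 1 - (s : ℝ) - ∑ i, (q i)⁻¹) :
      LSet r α (α - 1 - (s : ℝ) - ∑ i, (q i)⁻¹)

/-- `μ` is the Laplacian spectral radius of `G`, i.e. the largest eigenvalue of the
Laplacian matrix `D(G) - A(G)`. -/
def IsLapSpecRad {V : Type} [Fintype V] (G : SimpleGraph V) (μ : ℝ) : Prop :=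
  letI := Classical.decEq V
  letI := Classical.decRel G.Adj
  μ ∈ spectrum ℝ (G.lapMatrix ℝ) ∧ ∀ x ∈ spectrum ℝ (G.lapMatrix ℝ), x ≤ μ

/-- The maximum degree of a finite simple graph. -/
noncomputable def maxDeg {V : Type} [Fintype V] (G : SimpleGraph V) : ℕ :=
  letI := Classical.decRel G.Adj
  G.maxDegree

section AuxTreeLemmas

set_option linter.unusedSectionVars false

variable {V : Type} [DecidableEq V] {G : SimpleGraph V}


variable {V : Type} [DecidableEq V] {G : SimpleGraph V}

lemma myIsPath_concat {u v w : V} {p : G.Walk u v} (hp : p.IsPath) (h : G.Adj v w)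
    (hw : w ∉ p.support) : (p.concat h).IsPath := by
  rw [SimpleGraph.Walk.isPath_def, SimpleGraph.Walk.support_concat,
    List.nodup_append']
  refine ⟨hp.support_nodup, List.nodup_singleton _, ?_⟩
  simp only [List.disjoint_singleton]
  exact hw

lemma geod (hc : G.Connected) (u v : V) :
    ∃ p : G.Walk u v, p.IsPath ∧ p.length = G.dist u v := by
  obtain ⟨p, hp⟩ := hc.exists_walk_length_eq_dist u v
  exact ⟨p, p.isPath_of_length_eq_dist hp, hp⟩

lemma dist_mem_lt (z : V) {x y : V} (p : G.Walk z x) (hp : p.length = G.dist z x)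
    (hy : y ∈ p.support) (hyx : y ≠ x) : G.dist z y < G.dist z x := by
  have h1 : G.dist z y ≤ (p.takeUntil y hy).length := SimpleGraph.dist_le _
  have h2 := SimpleGraph.Walk.take_spec p hy
  have h3 : (p.takeUntil y hy).length + (p.dropUntil y hy).length = p.length := by
    rw [← SimpleGraph.Walk.length_append, h2]
  have h4 : (p.dropUntil y hy).length ≠ 0 := by
    intro h0
    exact hyx (SimpleGraph.Walk.eq_of_length_eq_zero h0)
  omega

/-- Lemma A: no two adjacent vertices are equidistant from any vertex, in a tree. -/
lemma adj_dist_ne (hc : G.Connected) (hac : G.IsAcyclic) {x y : V} (hxy : G.Adj x y) (z : V) :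
    G.dist z x ≠ G.dist z y := by
  intro heq
  obtain ⟨p, hp, hpl⟩ := geod hc z x
  have hy : y ∉ p.support := by
    intro hy
    have := dist_mem_lt z p hpl hy (fun h => hxy.ne (h.symm ▸ rfl))
    omega
  have hq : (p.concat hxy).IsPath := myIsPath_concat hp hxy hy
  obtain ⟨p', hp', hpl'⟩ := geod hc z y
  have := hac.path_unique ⟨p.concat hxy, hq⟩ ⟨p', hp'⟩
  have hlen : (p.concat hxy).length = p'.length :=
    congrArg (fun q : G.Path z y => q.1.length) this
  rw [SimpleGraph.Walk.length_concat] at hlen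
  omega

lemma dist_dichotomy (hc : G.Connected) (hac : G.IsAcyclic) {x y : V} (hxy : G.Adj x y) (z : V) :
    G.dist z y = G.dist z x + 1 ∨ G.dist z x = G.dist z y + 1 := by
  have h1 : G.dist z y ≤ G.dist z x + 1 := by
    have := hc.dist_triangle (u := z) (v := x) (w := y)
    rwa [SimpleGraph.dist_eq_one_iff_adj.mpr hxy] at this
  have h2 : G.dist z x ≤ G.dist z y + 1 := by
    have := hc.dist_triangle (u := z) (v := y) (w := x)
    rwa [SimpleGraph.dist_eq_one_iff_adj.mpr hxy.symm] at this
  have h3 := adj_dist_ne hc hac hxy z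
  omega

/-- Lemma B: unique gateway. -/
lemma gateway_unique (hc : G.Connected) (hac : G.IsAcyclic) {v x₁ x₂ z : V}
    (h1 : G.Adj x₁ v) (h2 : G.Adj x₂ v)
    (hd1 : G.dist z x₁ + 1 = G.dist z v) (hd2 : G.dist z x₂ + 1 = G.dist z v) : x₁ = x₂ := by
  obtain ⟨p₁, hp₁, hl₁⟩ := geod hc z x₁
  obtain ⟨p₂, hp₂, hl₂⟩ := geod hc z x₂
  have hv₁ : v ∉ p₁.support := by
    intro hv
    have : G.dist z v ≤ (p₁.takeUntil v hv).length := SimpleGraph.dist_le _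
    have := SimpleGraph.Walk.length_takeUntil_le p₁ hv
    omega
  have hv₂ : v ∉ p₂.support := by
    intro hv
    have : G.dist z v ≤ (p₂.takeUntil v hv).length := SimpleGraph.dist_le _
    have := SimpleGraph.Walk.length_takeUntil_le p₂ hv
    omega
  have hq₁ : (p₁.concat h1).IsPath := myIsPath_concat hp₁ h1 hv₁
  have hq₂ : (p₂.concat h2).IsPath := myIsPath_concat hp₂ h2 hv₂
  have heq := hac.path_unique ⟨p₁.concat h1, hq₁⟩ ⟨p₂.concat h2, hq₂⟩
  rw [Subtype.ext_iff] at heq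
  obtain ⟨hv, -⟩ := SimpleGraph.Walk.concat_inj heq
  exact hv

/-- The "side" of an edge: vertices closer to `v` than to `w`. -/
def sideSet (G : SimpleGraph V) (v w : V) : Set V := {y : V | G.dist y v < G.dist y w}

lemma side_ssubset (hc : G.Connected) (hac : G.IsAcyclic) {v w x : V}
    (hvw : G.Adj v w) (hxv : G.Adj x v) (hxw : x ≠ w) :
    sideSet G x v ⊂ sideSet G v w := by
  constructor
  · intro y hy
    simp only [sideSet, Set.mem_setOf_eq] at hy ⊢
    have hyv : G.dist y v = G.dist y x + 1 := by
      rcases dist_dichotomy hc hac hxv y with h | h <;> omega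
    rcases dist_dichotomy hc hac hvw y with h | h
    · omega
    · exfalso
      exact hxw (gateway_unique (z := y) hc hac hxv hvw.symm (by omega) (by omega))
  · intro hsub
    have hv : v ∈ sideSet G v w := by
      simp only [sideSet, Set.mem_setOf_eq, SimpleGraph.dist_self]
      have : G.dist v w = 1 := SimpleGraph.dist_eq_one_iff_adj.mpr hvw
      omega
    have := hsub hv
    simp only [sideSet, Set.mem_setOf_eq, SimpleGraph.dist_self] at this
    omega
lemma main_ratio {V : Type} [Fintype V] [DecidableEq V] {T : SimpleGraph V} [DecidableRel T.Adj]
    (hc : T.Connected) (hac : T.IsAcyclic) {r : ℕ} (hΔ : T.maxDegree ≤ r) {α : ℝ}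
    {φ : V → ℝ} (hφpos : ∀ v, 0 < φ v)
    (hφ : ∀ v, (α - (T.degree v : ℝ)) * φ v = ∑ w ∈ T.neighborFinset v, φ w) :
    ∀ n : ℕ, ∀ v w : V, T.Adj v w → (sideSet T v w).ncard ≤ n → LSet r α (φ w / φ v) := by
  intro n
  induction n with
  | zero =>
    intro v w hvw hn
    exfalso
    have hv : v ∈ sideSet T v w := by
      simp only [sideSet, Set.mem_setOf_eq, SimpleGraph.dist_self]
      have : T.dist v w = 1 := SimpleGraph.dist_eq_one_iff_adj.mpr hvw
      omega
    have : 0 < (sideSet T v w).ncard :=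
      Set.ncard_pos (Set.toFinite _) |>.mpr ⟨v, hv⟩
    omega
  | succ n IH =>
    intro v w hvw hn
    have hv0 : φ v ≠ 0 := ne_of_gt (hφpos v)
    have hwmem : w ∈ T.neighborFinset v := (SimpleGraph.mem_neighborFinset T v w).mpr hvw
    by_cases hleaf : (T.neighborFinset v).erase w = ∅
    · -- leaf case
      have hNv : T.neighborFinset v = {w} := by
        rcases (Finset.erase_eq_empty_iff _ _).mp hleaf with h | h
        · exact absurd (h ▸ hwmem) (Finset.notMem_empty w)
        · exact h
      have hdeg : (T.degree v : ℝ) = 1 := by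
        rw [SimpleGraph.degree, hNv]; norm_num
      have heq := hφ v
      rw [hNv, Finset.sum_singleton, hdeg] at heq
      have : φ w / φ v = α - 1 := by rw [div_eq_iff hv0, ← heq]
      exact this ▸ LSet.base
    · -- internal case
      set s : Finset V := (T.neighborFinset v).erase w with hs
      have hne : s.Nonempty := Finset.nonempty_iff_ne_empty.mpr hleaf
      set k := s.card with hk
      have hk1 : 1 ≤ k := Finset.card_pos.mpr hne
      have hdeg : T.degree v = k + 1 := by
        have h1 : k = T.degree v - 1 := Finset.card_erase_of_mem hwmem
        have h2 : 1 ≤ T.degree v := by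
          rw [SimpleGraph.degree]
          exact Finset.card_pos.mpr ⟨w, hwmem⟩
        omega
      have hkr : k ≤ r - 1 := by
        have := T.degree_le_maxDegree v
        omega
      have e : {x // x ∈ s} ≃ Fin k := Fintype.equivFinOfCardEq (Fintype.card_coe s)
      set q : Fin k → ℝ := fun i => φ v / φ ((e.symm i : {x // x ∈ s}) : V) with hq
      have hadjmem : ∀ x ∈ s, T.Adj x v ∧ x ≠ w := by
        intro x hx
        obtain ⟨hxw, hxN⟩ := Finset.mem_erase.mp hx
        exact ⟨((SimpleGraph.mem_neighborFinset T v x).mp hxN).symm, hxw⟩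
      have hmem : ∀ i, LSet r α (q i) := by
        intro i
        have hx : ((e.symm i : {x // x ∈ s}) : V) ∈ s := (e.symm i).2
        obtain ⟨hadj, hxw⟩ := hadjmem _ hx
        have hss := side_ssubset hc hac hvw hadj hxw
        have hlt : (sideSet T ((e.symm i : {x // x ∈ s}) : V) v).ncard < (sideSet T v w).ncard :=
          Set.ncard_lt_ncard hss (Set.toFinite _)
        exact IH _ v hadj (by omega)
      have hsum : ∑ i, (q i)⁻¹ = (∑ x ∈ s, φ x) / φ v := by
        have h1 : ∀ i, (q i)⁻¹ = φ ((e.symm i : {x // x ∈ s}) : V) / φ v := by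
          intro i; rw [hq]; simp [inv_div]
        rw [Fintype.sum_congr _ _ h1]
        rw [Equiv.sum_comp e.symm (fun x : {x // x ∈ s} => φ (x : V) / φ v)]
        rw [← Finset.sum_div]
        congr 1
        exact Finset.sum_coe_sort s φ
      have hsplit : ∑ x ∈ T.neighborFinset v, φ x = φ w + ∑ x ∈ s, φ x :=
        (Finset.add_sum_erase _ φ hwmem).symm
      have heq := hφ v
      rw [hsplit, hdeg] at heq
      push_cast at heq
      have key : α - 1 - (k : ℝ) - ∑ i, (q i)⁻¹ = φ w / φ v := by
        rw [hsum]
        field_simp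
        linarith [heq]
      have hpos : 0 < α - 1 - (k : ℝ) - ∑ i, (q i)⁻¹ := by
        rw [key]
        exact div_pos (hφpos w) (hφpos v)
      have := LSet.step k hk1 hkr q hmem hpos
      rwa [key] at this


end AuxTreeLemmas

theorem stmt_4 {V : Type} [Fintype V] [DecidableEq V] (T : SimpleGraph V)
    [DecidableRel T.Adj] (htree : T.IsTree) (hcard : 2 ≤ Fintype.card V)
    (r : ℕ) (hr : 1 ≤ r) (hΔ : T.maxDegree ≤ r)
    (α : ℝ) (hα : IsLapSpecRad T α)
    (φ : V → ℝ) (hφpos : ∀ v, 0 < φ v)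
    (hφ : ∀ v, (α - (T.degree v : ℝ)) * φ v = ∑ w ∈ T.neighborFinset v, φ w) :
    (∀ u₁ u₂ : V, T.Adj u₁ u₂ → LSet r α (φ u₁ / φ u₂)) ∧ LSet r α (α - 1)⁻¹ :=   by
  have hc := htree.isConnected
  have hac := htree.IsAcyclic
  have hmain : ∀ u₁ u₂ : V, T.Adj u₁ u₂ → LSet r α (φ u₁ / φ u₂) := by
    intro u₁ u₂ h
    exact main_ratio hc hac hΔ hφpos hφ ((sideSet T u₂ u₁).ncard) u₂ u₁ h.symm le_rfl
  refine ⟨hmain, ?_⟩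
  have hne : Nonempty V := Fintype.card_pos_iff.mp (by omega)
  obtain ⟨u₀⟩ := hne
  obtain ⟨v, -, hmax⟩ := Finset.exists_max_image Finset.univ (fun y => T.dist u₀ y)
    ⟨u₀, Finset.mem_univ u₀⟩
  have hmax' : ∀ y : V, T.dist u₀ y ≤ T.dist u₀ v := fun y => hmax y (Finset.mem_univ y)
  obtain ⟨u₁, hu₁⟩ := Fintype.exists_ne_of_one_lt_card (by omega) u₀
  have hd1 : 1 ≤ T.dist u₀ u₁ := hc.pos_dist_of_ne (Ne.symm hu₁)
  have hdv : 1 ≤ T.dist u₀ v := le_trans hd1 (hmax' u₁)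
  obtain ⟨p, hp, hpl⟩ := geod hc u₀ v
  have hrlen : 0 < p.reverse.length := by
    rw [SimpleGraph.Walk.length_reverse]; omega
  obtain ⟨w, hvw, qrest, hqr⟩ := SimpleGraph.Walk.not_nil_iff.mp
    (SimpleGraph.Walk.not_nil_iff_lt_length.mpr hrlen)
  have hqlen : qrest.length + 1 = T.dist u₀ v := by
    have : p.reverse.length = qrest.length + 1 := by rw [hqr, SimpleGraph.Walk.length_cons]
    rw [SimpleGraph.Walk.length_reverse] at this
    omega
  have hdw : T.dist u₀ w + 1 = T.dist u₀ v := by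
    have h1 : T.dist u₀ w ≤ qrest.length := by
      rw [SimpleGraph.dist_comm]
      exact SimpleGraph.dist_le qrest
    have h2 : T.dist u₀ v ≤ T.dist u₀ w + 1 := by
      have := hc.dist_triangle (u := u₀) (v := w) (w := v)
      rwa [SimpleGraph.dist_eq_one_iff_adj.mpr hvw.symm] at this
    omega
  have hNv : T.neighborFinset v = {w} := by
    ext x
    simp only [SimpleGraph.mem_neighborFinset, Finset.mem_singleton]
    constructor
    · intro hvx
      rcases dist_dichotomy hc hac hvx u₀ with h | h
      · have := hmax' x; omega
      · exact gateway_unique (z := u₀) hc hac hvx.symm hvw.symm (by omega) (by omega)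
    · rintro rfl; exact hvw
  have hdeg : (T.degree v : ℝ) = 1 := by rw [SimpleGraph.degree, hNv]; norm_num
  have heq := hφ v
  rw [hNv, Finset.sum_singleton, hdeg] at heq
  have hα1 : 0 < α - 1 := by nlinarith [hφpos v, hφpos w]
  have hratio : φ v / φ w = (α - 1)⁻¹ := by
    rw [← heq]
    field_simp
    exact div_self (ne_of_gt (hφpos v))
  have := hmain v w hvw
  rwa [hratio] at this
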